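/- Let M_k denote the number of irreducible complex representations of the iterated wreath product W(r|_k) = Z_{r_1} ≀ ... ≀ Z_{r_k}. Then M_1 = r_1 and M_k = (1/r_k) Σ_{d | c | r_k} μ(c/d) M_{k-1}^{r_k/c} d^2, where the sum is over pairs of divisors d | c with c | r_k and μ is the Möbius function. -/

import Mathlib

set_option linter.unusedSectionVars false
open Finset

variable {G : Type*} [Group G]


/-- solutions of the twisted commutation equation -/
def Sols (n : ℕ) (G : Type*) [Group G] (s t : ZMod n) : Type _ :=
  {p : (ZMod n → G) × (ZMod n → G) // ∀ i, p.1 i * p.2 (i + s) = p.2 i * p.1 (i + t)}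

/-- partial products around the cycle -/
def Qp {L : ℕ} (b : ZMod L → G) : ℕ → G
  | 0 => 1
  | j + 1 => Qp b j * b (j : ZMod L)

lemma Qp_succ {L : ℕ} (b : ZMod L → G) (j : ℕ) : Qp b (j+1) = Qp b j * b (j : ZMod L) := rfl

section L
variable {L : ℕ} [NeZero L]

lemma zmod_cast_val (i : ZMod L) : ((i.val : ℕ) : ZMod L) = i :=
  ZMod.natCast_rightInverse i

omit [NeZero L] in
/-- b₂ is conjugation-determined by the equations -/
lemma sols_det (p : Sols L G 1 0) (j : ℕ) :
    p.1.2 (j : ZMod L) = (Qp p.1.1 j)⁻¹ * p.1.2 0 * Qp p.1.1 j := by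
  induction j with
  | zero => simp [Qp]
  | succ j ih =>
    have h := p.2 (j : ZMod L)
    simp only [add_zero] at h
    have : p.1.2 ((j:ZMod L) + 1) = (p.1.1 (j:ZMod L))⁻¹ * p.1.2 (j:ZMod L) * p.1.1 (j:ZMod L) := by
      rw [mul_assoc, ← h, ← mul_assoc]; group
    rw [Nat.cast_add, Nat.cast_one, this, ih, Qp_succ]
    group

def cycleEquiv : {q : (ZMod L → G) × G // Commute (Qp q.1 L) q.2} ≃ Sols L G 1 0 where
  toFun q := ⟨(q.1.1, fun i => (Qp q.1.1 i.val)⁻¹ * q.1.2 * Qp q.1.1 i.val), by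
    intro i
    obtain ⟨⟨b, c⟩, h⟩ := q
    simp only [add_zero]
    have hval : (i + 1 : ZMod L).val = (i.val + 1) % L := by
      conv_lhs => rw [← zmod_cast_val i]
      rw [← Nat.cast_one, ← Nat.cast_add, ZMod.val_natCast]
    rcases eq_or_lt_of_le (Nat.succ_le_of_lt i.val_lt) with hL | hL
    · -- wrap-around case : i.val + 1 = L
      have hL' : i.val + 1 = L := hL
      have hz : (i.val + 1) % L = 0 := by rw [hL', Nat.mod_self]
      rw [hval, hz]
      have hP : Qp b L = Qp b i.val * b i := by
        have := congrArg (Qp (G := G) b) hL'.symm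
        rwa [Qp_succ, zmod_cast_val] at this
      rw [hP] at h
      have h1 : Qp b i.val * b i * c = c * (Qp b i.val * b i) := h.eq
      have key := congrArg (fun x => (Qp b i.val)⁻¹ * x) h1
      simp only [Qp]
      simp only [mul_assoc, inv_mul_cancel_left, inv_one, one_mul, mul_one] at key ⊢
      exact key
    · rw [hval, Nat.mod_eq_of_lt hL, Qp_succ, zmod_cast_val]
      group⟩
  invFun p := ⟨(p.1.1, p.1.2 0), by
    have h := sols_det p L
    rw [ZMod.natCast_self] at h
    have : Qp p.1.1 L * p.1.2 0 = Qp p.1.1 L * ((Qp p.1.1 L)⁻¹ * p.1.2 0 * Qp p.1.1 L) := by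
      rw [← h]
    unfold Commute SemiconjBy
    rw [this]; group⟩
  left_inv q := by
    obtain ⟨⟨b, c⟩, h⟩ := q
    apply Subtype.ext
    show (b, _) = (b, c)
    rw [Prod.mk.injEq]
    refine ⟨rfl, ?_⟩
    simp [Qp]
  right_inv p := by
    obtain ⟨⟨b₁, b₂⟩, h⟩ := p
    apply Subtype.ext
    show (b₁, _) = (b₁, b₂)
    rw [Prod.mk.injEq]
    refine ⟨rfl, funext fun i => ?_⟩
    have := sols_det ⟨(b₁, b₂), h⟩ i.val
    simp only [zmod_cast_val] at this
    exact this.symm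

end L


section L2
variable {L : ℕ} [NeZero L]

lemma natCast_val_eq {j : ℕ} (h : j < L) : ((j : ZMod L)).val = j := by
  rw [ZMod.val_natCast, Nat.mod_eq_of_lt h]

lemma Qp_update (b : ZMod L → G) (x : G) (j : ℕ) (hj : j ≤ L - 1) :
    Qp (Function.update b (((L-1 : ℕ) : ZMod L)) x) j = Qp b j := by
  induction j with
  | zero => rfl
  | succ j ih =>
    have hjL : j < L - 1 := hj
    rw [Qp_succ, Qp_succ, ih (le_of_lt hjL)]
    congr 1
    apply Function.update_of_ne
    intro heq
    have h1 : ((j : ZMod L)).val = j := natCast_val_eq (lt_of_lt_of_le hjL (Nat.sub_le L 1))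
    have h2 : (((L-1 : ℕ) : ZMod L)).val = L - 1 := natCast_val_eq (Nat.sub_lt (Nat.pos_of_ne_zero (NeZero.ne L)) one_pos)
    rw [heq, h2] at h1
    omega

lemma Qp_last (b : ZMod L → G) :
    Qp b L = Qp b (L-1) * b (((L-1 : ℕ) : ZMod L)) := by
  have h : L - 1 + 1 = L := Nat.succ_pred_eq_of_pos (Nat.pos_of_ne_zero (NeZero.ne L))
  have := congrArg (Qp (G := G) b) h
  rw [Qp_succ] at this
  exact this.symm

/-- change of variables in the last coordinate -/
def lastVar : (ZMod L → G) ≃ (ZMod L → G) where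
  toFun b := Function.update b (((L-1 : ℕ) : ZMod L)) (Qp b (L-1) * b (((L-1 : ℕ) : ZMod L)))
  invFun b := Function.update b (((L-1 : ℕ) : ZMod L)) ((Qp b (L-1))⁻¹ * b (((L-1 : ℕ) : ZMod L)))
  left_inv b := by
    set j₀ := (((L-1 : ℕ) : ZMod L)) with hj₀
    dsimp only
    rw [Qp_update b _ (L-1) le_rfl, Function.update_self, Function.update_idem,
      inv_mul_cancel_left, Function.update_eq_self]
  right_inv b := by
    set j₀ := (((L-1 : ℕ) : ZMod L)) with hj₀
    dsimp only
    rw [Qp_update b _ (L-1) le_rfl, Function.update_self, Function.update_idem,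
      mul_inv_cancel_left, Function.update_eq_self]

lemma lastVar_prop (b : ZMod L → G) : (lastVar b) (((L-1 : ℕ) : ZMod L)) = Qp b L := by
  rw [Qp_last]
  exact Function.update_self _ _ _

def commEquivOne :
    {q : (ZMod L → G) × G // Commute (Qp q.1 L) q.2}
      ≃ {q : (ZMod L → G) × G // Commute (q.1 (((L-1 : ℕ) : ZMod L))) q.2} :=
  Equiv.subtypeEquiv (Equiv.prodCongr lastVar (Equiv.refl G)) (by
    rintro ⟨b, c⟩
    simp only [Equiv.prodCongr_apply, Equiv.coe_refl, Prod.map_apply, id_eq]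
    rw [lastVar_prop])

def splitEquiv (j₀ : ZMod L) :
    {q : (ZMod L → G) × G // Commute (q.1 j₀) q.2}
      ≃ ({i : ZMod L // i ≠ j₀} → G) × {p : G × G // Commute p.1 p.2} where
  toFun q := (fun i => q.1.1 i.1, ⟨(q.1.1 j₀, q.1.2), q.2⟩)
  invFun q := ⟨(fun i => if h : i = j₀ then q.2.1.1 else q.1 ⟨i, h⟩, q.2.1.2), by
    simpa using q.2.2⟩
  left_inv q := by
    obtain ⟨⟨b, c⟩, h⟩ := q
    apply Subtype.ext
    show (_, c) = (b, c)
    rw [Prod.mk.injEq]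
    refine ⟨funext fun i => ?_, rfl⟩
    by_cases hi : i = j₀ <;> simp [hi]
  right_inv q := by
    obtain ⟨f, ⟨⟨x, c⟩, h⟩⟩ := q
    refine Prod.ext (funext fun i => ?_) (Subtype.ext ?_)
    · simp [i.2]
    · show (_, c) = (x, c)
      simp

variable [Finite G]

lemma card_sols_one_zero :
    Nat.card (Sols L G 1 0) =
      Nat.card G ^ (L - 1) * Nat.card {p : G × G // Commute p.1 p.2} := by
  classical
  have e := (cycleEquiv (G := G) (L := L)).symm.trans
    (commEquivOne.trans (splitEquiv (((L-1 : ℕ) : ZMod L))))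
  rw [Nat.card_congr e, Nat.card_prod, Nat.card_fun]
  congr 1
  congr 1
  rw [Nat.card_eq_fintype_card]
  simp [Fintype.card_subtype_compl, ZMod.card]

end L2

section MOVES
variable {G : Type*} [Group G] {n : ℕ}

def solsSwap (s t : ZMod n) : Sols n G s t ≃ Sols n G t s where
  toFun p := ⟨(p.1.2, p.1.1), fun i => (p.2 i).symm⟩
  invFun p := ⟨(p.1.2, p.1.1), fun i => (p.2 i).symm⟩
  left_inv p := rfl
  right_inv p := rfl

def solsT (s t : ZMod n) : Sols n G s t ≃ Sols n G s (t - s) where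
  toFun p := ⟨(p.1.1, fun i => p.1.2 i * (p.1.1 (i + (t - s)))⁻¹), by
    intro i
    dsimp only
    rw [show i + s + (t - s) = i + t by ring, inv_mul_cancel_right, ← mul_assoc, p.2 i,
      mul_inv_cancel_right]⟩
  invFun p := ⟨(p.1.1, fun i => p.1.2 i * p.1.1 (i + (t - s))), by
    intro i
    dsimp only
    rw [show i + s + (t - s) = i + t by ring, ← mul_assoc, p.2 i]⟩
  left_inv p := by
    apply Subtype.ext
    show (p.1.1, _) = p.1
    rw [Prod.mk.injEq]
    exact ⟨rfl, funext fun i => by dsimp only; group⟩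
  right_inv p := by
    apply Subtype.ext
    show (p.1.1, _) = p.1
    rw [Prod.mk.injEq]
    exact ⟨rfl, funext fun i => by dsimp only; group⟩

lemma card_solsT_iter (s t : ZMod n) (k : ℕ) :
    Nat.card (Sols n G s t) = Nat.card (Sols n G s (t - (k : ZMod n) * s)) := by
  induction k with
  | zero => simp
  | succ k ih =>
    rw [ih, Nat.card_congr (solsT s (t - (k : ZMod n) * s))]
    congr 2
    push_cast
    ring

lemma card_sols_gcd (a b : ℕ) :
    Nat.card (Sols n G (a : ZMod n) (b : ZMod n)) =
      Nat.card (Sols n G ((Nat.gcd a b : ℕ) : ZMod n) 0) := by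
  induction a, b using Nat.gcd.induction with
  | H0 b =>
    rw [Nat.gcd_zero_left, Nat.card_congr (solsSwap _ _), Nat.cast_zero]
  | H1 a b ha ih =>
    have key : (b : ZMod n) - ((b / a : ℕ) : ZMod n) * (a : ZMod n) = ((b % a : ℕ) : ZMod n) := by
      have h := Nat.div_add_mod b a
      have : ((a * (b / a) + b % a : ℕ) : ZMod n) = (b : ZMod n) := by rw [h]
      push_cast at this
      linear_combination -this
    rw [card_solsT_iter _ _ (b / a), key, Nat.card_congr (solsSwap _ _), ih, ← Nat.gcd_rec]

lemma card_sols_reduce [NeZero n] (s t : ZMod n) :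
    Nat.card (Sols n G s t) =
      Nat.card (Sols n G ((Nat.gcd s.val t.val : ℕ) : ZMod n) 0) := by
  have := card_sols_gcd (G := G) (n := n) s.val t.val
  rwa [ZMod.natCast_rightInverse s, ZMod.natCast_rightInverse t] at this

end MOVES

section DECOMP
variable {G : Type*} [Group G] {n : ℕ} [NeZero n]

lemma card_sols_cast_zero (g : ℕ) :
    Nat.card (Sols n G (g : ZMod n) 0) =
      Nat.card (Sols (n / Nat.gcd g n) G 1 0) ^ (Nat.gcd g n) := by
  have hn : 0 < n := Nat.pos_of_ne_zero (NeZero.ne n)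
  set d := Nat.gcd g n with hd_def
  set L := n / d with hL_def
  have hd : d ∣ n := Nat.gcd_dvd_right g n
  have hdg : d ∣ g := Nat.gcd_dvd_left g n
  have hd0 : 0 < d := Nat.gcd_pos_of_pos_right g hn
  have hL0 : 0 < L := Nat.div_pos (Nat.le_of_dvd hn hd) hd0
  haveI : NeZero L := ⟨hL0.ne'⟩
  have hdL : d * L = n := Nat.mul_div_cancel' hd
  set g' := g / d with hg'_def
  have hgg : d * g' = g := Nat.mul_div_cancel' hdg
  have hcop : Nat.Coprime L g' := by
    have := Nat.coprime_div_gcd_div_gcd (m := g) (n := n) hd0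
    exact (this.symm)
  -- the basic bijection of index sets
  set Bmap : Fin d × ZMod L → ZMod n := fun je => ((je.1.1 + je.2.val * g : ℕ) : ZMod n)
    with hB_def
  have Bstep : ∀ (j : Fin d) (e : ZMod L), Bmap (j, e + 1) = Bmap (j, e) + (g : ZMod n) := by
    intro j e
    show ((j.1 + (e + 1).val * g : ℕ) : ZMod n) = ((j.1 + e.val * g : ℕ) : ZMod n) + (g : ZMod n)
    have hval : (e + 1).val = (e.val + 1) % L := by
      conv_lhs => rw [show e + 1 = ((e.val + 1 : ℕ) : ZMod L) by
        push_cast [ZMod.natCast_rightInverse e]; ring]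
      rw [ZMod.val_natCast]
    rw [hval, ← Nat.cast_add]
    rw [ZMod.natCast_eq_natCast_iff]
    have m1 : (e.val + 1) % L * g ≡ (e.val + 1) * g [MOD L * g] :=
      (Nat.mod_modEq _ _).mul_right' _
    have hdvd : n ∣ L * g := ⟨g', by rw [← hgg, ← hdL]; ring⟩
    have m2 : (e.val + 1) % L * g ≡ (e.val + 1) * g [MOD n] := m1.of_dvd hdvd
    calc j.1 + (e.val + 1) % L * g ≡ j.1 + (e.val + 1) * g [MOD n] := m2.add_left _
    _ = j.1 + e.val * g + g := by ring
  have hinj : Function.Injective Bmap := by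
    rintro ⟨j, e⟩ ⟨j', e'⟩ h
    simp only [hB_def] at h
    rw [ZMod.natCast_eq_natCast_iff] at h
    -- first coordinate
    have hjj : j = j' := by
      have hmd : j.1 + e.val * g ≡ j'.1 + e'.val * g [MOD d] := h.of_dvd hd
      have h1 : j.1 ≡ j'.1 [MOD d] := by
        have e1 : e.val * g ≡ 0 [MOD d] := (Nat.modEq_zero_iff_dvd).2 (hdg.mul_left _)
        have e2 : e'.val * g ≡ 0 [MOD d] := (Nat.modEq_zero_iff_dvd).2 (hdg.mul_left _)
        calc j.1 ≡ j.1 + 0 [MOD d] := by rw [Nat.add_zero]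
        _ ≡ j.1 + e.val * g [MOD d] := e1.symm.add_left _
        _ ≡ j'.1 + e'.val * g [MOD d] := hmd
        _ ≡ j'.1 + 0 [MOD d] := e2.add_left _
        _ = j'.1 := by rw [Nat.add_zero]
      have := h1.eq_of_lt_of_lt j.isLt j'.isLt
      exact Fin.ext this
    subst hjj
    -- second coordinate
    have h2 : e.val * g ≡ e'.val * g [MOD n] := (Nat.ModEq.add_left_cancel' _ h)
    have key : ∀ (x y : ZMod L), x.val ≤ y.val → y.val * g ≡ x.val * g [MOD n] → y = x := by
      intro x y hxy hmod
      have hdvd : n ∣ y.val * g - x.val * g := (Nat.modEq_iff_dvd' (Nat.mul_le_mul_right _ hxy)).1 hmod.symm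
      rw [← Nat.sub_mul] at hdvd
      have : d * L ∣ (y.val - x.val) * (d * g') := by rw [hdL, hgg]; exact hdvd
      have hLd : L ∣ (y.val - x.val) * g' := by
        rw [Nat.mul_comm d L] at this
        have h3 : L * d ∣ ((y.val - x.val) * g') * d := by
          rw [show (y.val - x.val) * g' * d = (y.val - x.val) * (d * g') by ring]
          exact this
        exact (Nat.mul_dvd_mul_iff_right hd0).1 h3
      have hLsub : L ∣ y.val - x.val := hcop.dvd_of_dvd_mul_right hLd
      have hsub0 : y.val - x.val = 0 := by
        rcases Nat.eq_zero_or_pos (y.val - x.val) with h0 | hpos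
        · exact h0
        · have hy := ZMod.val_lt y
          have := Nat.le_of_dvd hpos hLsub
          omega
      have hvv : y.val = x.val := by omega
      rw [← ZMod.natCast_rightInverse y, ← ZMod.natCast_rightInverse x, hvv]
    rcases le_total e.val e'.val with hle | hle
    · have := key e e' hle h2.symm; rw [this]
    · have := key e' e hle h2; rw [this]
  have hbij : Function.Bijective Bmap := by
    rw [Fintype.bijective_iff_injective_and_card]
    refine ⟨hinj, ?_⟩
    rw [Fintype.card_prod, Fintype.card_fin, ZMod.card, ZMod.card, hdL]
  set BE : (Fin d × ZMod L) ≃ ZMod n := Equiv.ofBijective Bmap hbij with hBE_def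
  have hBEstep : ∀ (j : Fin d) (e : ZMod L), BE (j, e + 1) = BE (j, e) + (g : ZMod n) :=
    Bstep
  have hBEsymm : ∀ i : ZMod n, BE.symm (i + (g : ZMod n)) =
      ((BE.symm i).1, (BE.symm i).2 + 1) := by
    intro i
    apply BE.injective
    rw [Equiv.apply_symm_apply, hBEstep, Prod.mk.eta, Equiv.apply_symm_apply]
  -- the decomposition equivalence
  have decomp : Sols n G (g : ZMod n) 0 ≃ (Fin d → Sols L G 1 0) := by
    refine ⟨fun p j => ⟨(fun e => p.1.1 (BE (j, e)), fun e => p.1.2 (BE (j, e))), ?_⟩,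
      fun F => ⟨(fun i => (F (BE.symm i).1).1.1 (BE.symm i).2,
                 fun i => (F (BE.symm i).1).1.2 (BE.symm i).2), ?_⟩, ?_, ?_⟩
    · intro e
      dsimp only
      have hp := p.2 (BE (j, e))
      rw [add_zero] at hp
      rw [add_zero, hBEstep]
      exact hp
    · intro i
      dsimp only
      have hc := (F (BE.symm i).1).2 (BE.symm i).2
      rw [add_zero] at hc
      rw [add_zero, hBEsymm i]
      exact hc
    · intro p
      apply Subtype.ext
      rw [Prod.mk.injEq]
      constructor <;> funext i <;> dsimp only <;>
        rw [Prod.mk.eta, Equiv.apply_symm_apply]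
    · intro F
      funext j
      apply Subtype.ext
      rw [Prod.mk.injEq]
      constructor <;> funext e <;> dsimp only <;>
        rw [Equiv.symm_apply_apply]
  rw [Nat.card_congr decomp, Nat.card_pi, Finset.prod_const, Finset.card_univ,
    Fintype.card_fin]

end DECOMP


section FORMULA
variable {G : Type*} [Group G] {n : ℕ} [NeZero n]

instance instFiniteSols [Finite G] (s t : ZMod n) : Finite (Sols n G s t) := by
  unfold Sols; exact Subtype.finite

lemma card_sols_formula [Finite G] (s t : ZMod n) :
    Nat.card (Sols n G s t) =
      Nat.card G ^ (n - Nat.gcd (Nat.gcd s.val t.val) n) *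
        Nat.card {p : G × G // Commute p.1 p.2} ^ (Nat.gcd (Nat.gcd s.val t.val) n) := by
  set g := Nat.gcd s.val t.val
  set d := Nat.gcd g n with hd_def
  have hn : 0 < n := Nat.pos_of_ne_zero (NeZero.ne n)
  have hd : d ∣ n := Nat.gcd_dvd_right g n
  have hd0 : 0 < d := Nat.gcd_pos_of_pos_right g hn
  have hL0 : 0 < n / d := Nat.div_pos (Nat.le_of_dvd hn hd) hd0
  haveI : NeZero (n / d) := ⟨hL0.ne'⟩
  rw [card_sols_reduce, card_sols_cast_zero, card_sols_one_zero, mul_pow, ← pow_mul]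
  congr 2
  have harith : ∀ (N D : ℕ), D ∣ N → (N / D - 1) * D = N - D := by
    intro N D hdvd
    rw [Nat.sub_mul, one_mul, Nat.div_mul_cancel hdvd]
  exact harith n d hd

end FORMULA

section SEMIDIRECT
variable {G : Type*} [Group G] {n : ℕ} [NeZero n]

def feq : ZMod n ≃ Fin n where
  toFun z := ⟨z.val, z.val_lt⟩
  invFun j := (j.1 : ZMod n)
  left_inv z := ZMod.natCast_rightInverse z
  right_inv j := Fin.ext (by simp [ZMod.val_natCast, Nat.mod_eq_of_lt j.isLt])

variable (ψ : Multiplicative (ZMod n) →* MulAut (Fin n → G))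
  (hn : 0 < n)
  (hψ : ∀ (c : Multiplicative (ZMod n)) (f : Fin n → G) (i : Fin n),
    ψ c f i = f ⟨(i.val + (Multiplicative.toAdd c).val) % n, Nat.mod_lt _ hn⟩)

/-- index shifting under feq -/
lemma feq_shift (i : ZMod n) (c : ZMod n) :
    feq (i + c) = ⟨((feq i).1 + c.val) % n, Nat.mod_lt _ hn⟩ := by
  apply Fin.ext
  show (i + c).val = (i.val + c.val) % n
  rw [ZMod.val_add]

def commPairsEquiv :
    {p : (SemidirectProduct (Fin n → G) (Multiplicative (ZMod n)) ψ) ×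
         (SemidirectProduct (Fin n → G) (Multiplicative (ZMod n)) ψ) // Commute p.1 p.2}
    ≃ Σ st : ZMod n × ZMod n, Sols n G st.1 st.2 where
  toFun p :=
    ⟨(Multiplicative.toAdd p.1.1.right, Multiplicative.toAdd p.1.2.right),
     ⟨(fun i => p.1.1.left (feq i), fun i => p.1.2.left (feq i)), by
        intro i
        obtain ⟨⟨x, y⟩, h⟩ := p
        have hl := congrArg SemidirectProduct.left h
        rw [SemidirectProduct.mul_left, SemidirectProduct.mul_left] at hl
        have hi := congrFun hl (feq i)
        simp only [Pi.mul_apply] at hi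
        rw [hψ x.right y.left (feq i), hψ y.right x.left (feq i)] at hi
        dsimp only
        rw [feq_shift hn i, feq_shift hn i]
        exact hi⟩⟩
  invFun q :=
    ⟨(⟨fun j => q.2.1.1 (feq.symm j), Multiplicative.ofAdd q.1.1⟩,
      ⟨fun j => q.2.1.2 (feq.symm j), Multiplicative.ofAdd q.1.2⟩), by
      obtain ⟨⟨s, t⟩, ⟨⟨a₁, a₂⟩, hc⟩⟩ := q
      unfold Commute SemiconjBy
      apply SemidirectProduct.ext
      · show (fun j => a₁ (feq.symm j)) * ψ (Multiplicative.ofAdd s) _ =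
          (fun j => a₂ (feq.symm j)) * ψ (Multiplicative.ofAdd t) _
        funext j
        simp only [Pi.mul_apply]
        rw [hψ, hψ]
        have key : ∀ (c : ZMod n), (feq.symm (⟨(j.val + c.val) % n, Nat.mod_lt _ hn⟩ : Fin n))
            = feq.symm j + c := by
          intro c
          apply feq.injective
          rw [Equiv.apply_symm_apply, feq_shift hn]
          apply Fin.ext
          show (j.val + c.val) % n = ((feq (feq.symm j)).1 + c.val) % n
          rw [Equiv.apply_symm_apply]
        simp only [toAdd_ofAdd]
        rw [key s, key t]
        exact hc (feq.symm j)
      · show Multiplicative.ofAdd s * Multiplicative.ofAdd t =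
          Multiplicative.ofAdd t * Multiplicative.ofAdd s
        exact mul_comm _ _⟩
  left_inv p := by
    obtain ⟨⟨x, y⟩, h⟩ := p
    apply Subtype.ext
    show (_, _) = (x, y)
    rw [Prod.mk.injEq]
    constructor <;>
    · apply SemidirectProduct.ext
      · funext j
        show _ = _
        simp [Equiv.symm_apply_apply]
      · rfl
  right_inv q := by
    obtain ⟨⟨s, t⟩, ⟨⟨a₁, a₂⟩, hc⟩⟩ := q
    refine Sigma.ext rfl (heq_of_eq ?_)
    apply Subtype.ext
    rw [Prod.mk.injEq]
    constructor <;> funext i <;> simp [Equiv.apply_symm_apply]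

lemma nat_card_sigma {ι : Type*} [Fintype ι] (f : ι → Type*) [∀ i, Finite (f i)] :
    Nat.card (Σ i, f i) = ∑ i, Nat.card (f i) := by
  classical
  letI : ∀ i, Fintype (f i) := fun i => Fintype.ofFinite _
  simp [Nat.card_eq_fintype_card]

lemma card_commPairs_semidirect [Finite G]
    (hn : 0 < n)
    (hψ : ∀ (c : Multiplicative (ZMod n)) (f : Fin n → G) (i : Fin n),
      ψ c f i = f ⟨(i.val + (Multiplicative.toAdd c).val) % n, Nat.mod_lt _ hn⟩) :
    Nat.card {p : (SemidirectProduct (Fin n → G) (Multiplicative (ZMod n)) ψ) ×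
         (SemidirectProduct (Fin n → G) (Multiplicative (ZMod n)) ψ) // Commute p.1 p.2}
      = ∑ s : ZMod n, ∑ t : ZMod n, Nat.card (Sols n G s t) := by
  rw [Nat.card_congr (commPairsEquiv ψ hn hψ), nat_card_sigma]
  rw [Fintype.sum_prod_type]

end SEMIDIRECT

section ARITH
open ArithmeticFunction
open scoped ArithmeticFunction.Moebius

lemma moebius_indicator {N : ℕ} (hN : N ≠ 0) :
    ∑ e ∈ N.divisors, (μ e : ℤ) = if N = 1 then 1 else 0 := by
  have h := congrArg (fun f : ArithmeticFunction ℤ => f N) moebius_mul_coe_zeta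
  simp only [coe_mul_zeta_apply, ArithmeticFunction.one_apply] at h
  exact h

lemma count_multiples' {k e : ℕ} (he : e ∣ k) (he0 : 0 < e) :
    ((range k).filter (fun a => e ∣ a)).card = k / e := by
  rw [← Finset.card_range (k / e)]
  apply Finset.card_bij' (fun a _ => a / e) (fun b _ => b * e)
  · intro a ha
    simp only [mem_filter, mem_range] at ha
    simp only [mem_range]
    exact Nat.div_lt_div_of_lt_of_dvd he ha.1
  · intro b hb
    simp only [mem_range] at hb
    simp only [mem_filter, mem_range]
    refine ⟨?_, dvd_mul_left e b⟩
    calc b * e < (k / e) * e := (Nat.mul_lt_mul_right he0).2 hb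
    _ = k := Nat.div_mul_cancel he
  · intro a ha
    simp only [mem_filter] at ha
    exact Nat.div_mul_cancel ha.2
  · intro b _
    exact Nat.mul_div_cancel b he0

lemma F2_eq {k : ℕ} (hk : 0 < k) :
    ((((range k ×ˢ range k).filter (fun p => Nat.gcd (Nat.gcd p.1 p.2) k = 1)).card : ℤ))
      = ∑ e ∈ k.divisors, (μ e : ℤ) * ((k / e : ℕ) : ℤ)^2 := by
  classical
  rw [Finset.card_filter, Nat.cast_sum]
  simp only [Nat.cast_ite, Nat.cast_one, Nat.cast_zero]
  have step2 : ∀ p ∈ range k ×ˢ range k,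
      (if Nat.gcd (Nat.gcd p.1 p.2) k = 1 then (1 : ℤ) else 0)
        = ∑ e ∈ k.divisors, (if e ∣ Nat.gcd (Nat.gcd p.1 p.2) k then (μ e : ℤ) else 0) := by
    intro p _
    have hg : Nat.gcd (Nat.gcd p.1 p.2) k ∣ k := Nat.gcd_dvd_right _ _
    have hg0 : Nat.gcd (Nat.gcd p.1 p.2) k ≠ 0 := (Nat.gcd_pos_of_pos_right _ hk).ne'
    rw [← Finset.sum_filter, Nat.divisors_filter_dvd_of_dvd hk.ne' hg,
      moebius_indicator hg0]
  rw [Finset.sum_congr rfl step2, Finset.sum_comm]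
  apply Finset.sum_congr rfl
  intro e he
  rw [Nat.mem_divisors] at he
  have he0 : 0 < e := Nat.pos_of_dvd_of_pos he.1 hk
  have hcond : ∀ p ∈ range k ×ˢ range k,
      (if e ∣ Nat.gcd (Nat.gcd p.1 p.2) k then (μ e : ℤ) else 0)
        = (if e ∣ p.1 ∧ e ∣ p.2 then (μ e : ℤ) else 0) := by
    intro p _
    congr 1
    · rw [eq_iff_iff, Nat.dvd_gcd_iff, Nat.dvd_gcd_iff]
      constructor
      · rintro ⟨⟨h1, h2⟩, _⟩; exact ⟨h1, h2⟩
      · rintro ⟨h1, h2⟩; exact ⟨⟨h1, h2⟩, he.1⟩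
  rw [Finset.sum_congr rfl hcond, ← Finset.sum_filter,
    show ((range k ×ˢ range k).filter (fun p => e ∣ p.1 ∧ e ∣ p.2))
      = ((range k).filter (fun a => e ∣ a)) ×ˢ ((range k).filter (fun a => e ∣ a)) from
      Finset.filter_product _ _,
    Finset.sum_const, Finset.card_product, count_multiples' he.1 he0, nsmul_eq_mul,
    Nat.cast_mul]
  ring

lemma E_eq {n c : ℕ} (hn : 0 < n) (hc : c ∣ n) :
    ((((range n ×ˢ range n).filter (fun p => Nat.gcd (Nat.gcd p.1 p.2) n = c)).card : ℤ))
      = ∑ e ∈ (n / c).divisors, (μ e : ℤ) * (((n / c) / e : ℕ) : ℤ)^2 := by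
  classical
  have hc0 : 0 < c := Nat.pos_of_dvd_of_pos hc hn
  set k := n / c with hk_def
  have hk : 0 < k := Nat.div_pos (Nat.le_of_dvd hn hc) hc0
  have hck : c * k = n := Nat.mul_div_cancel' hc
  rw [← F2_eq hk]
  congr 1
  apply Finset.card_bij' (fun p _ => (p.1 / c, p.2 / c)) (fun q _ => (c * q.1, c * q.2))
  · rintro ⟨a, b⟩ hab
    simp only [mem_filter, mem_product, mem_range] at hab ⊢
    obtain ⟨⟨ha, hb⟩, hg⟩ := hab
    have hca : c ∣ a := by
      rw [← hg]; exact (Nat.gcd_dvd_left _ _).trans (Nat.gcd_dvd_left a b)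
    have hcb : c ∣ b := by
      rw [← hg]; exact (Nat.gcd_dvd_left _ _).trans (Nat.gcd_dvd_right a b)
    refine ⟨⟨Nat.div_lt_div_of_lt_of_dvd hc ha, Nat.div_lt_div_of_lt_of_dvd hc hb⟩, ?_⟩
    have expand : Nat.gcd (Nat.gcd a b) n = c * Nat.gcd (Nat.gcd (a / c) (b / c)) k := by
      conv_lhs => rw [show a = c * (a / c) from (Nat.mul_div_cancel' hca).symm,
        show b = c * (b / c) from (Nat.mul_div_cancel' hcb).symm,
        show n = c * k from hck.symm]
      rw [Nat.gcd_mul_left, Nat.gcd_mul_left]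
    have key : c * Nat.gcd (Nat.gcd (a / c) (b / c)) k = c * 1 := by
      rw [mul_one, ← expand, hg]
    exact Nat.eq_of_mul_eq_mul_left hc0 key
  · rintro ⟨q1, q2⟩ hq
    simp only [mem_filter, mem_product, mem_range] at hq ⊢
    obtain ⟨⟨h1, h2⟩, hgq⟩ := hq
    refine ⟨⟨?_, ?_⟩, ?_⟩
    · calc c * q1 < c * k := (Nat.mul_lt_mul_left hc0).2 h1
      _ = n := hck
    · calc c * q2 < c * k := (Nat.mul_lt_mul_left hc0).2 h2
      _ = n := hck
    · show Nat.gcd (Nat.gcd (c * q1) (c * q2)) n = c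
      rw [Nat.gcd_mul_left, ← hck, Nat.gcd_mul_left, hgq, mul_one]
  · rintro ⟨a, b⟩ hab
    simp only [mem_filter, mem_product, mem_range] at hab
    obtain ⟨⟨ha, hb⟩, hg⟩ := hab
    have hca : c ∣ a := by
      rw [← hg]; exact (Nat.gcd_dvd_left _ _).trans (Nat.gcd_dvd_left a b)
    have hcb : c ∣ b := by
      rw [← hg]; exact (Nat.gcd_dvd_left _ _).trans (Nat.gcd_dvd_right a b)
    show (c * (a / c), c * (b / c)) = (a, b)
    rw [Nat.mul_div_cancel' hca, Nat.mul_div_cancel' hcb]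
  · rintro ⟨q1, q2⟩ _
    show (c * q1 / c, c * q2 / c) = (q1, q2)
    rw [Nat.mul_div_cancel_left q1 hc0, Nat.mul_div_cancel_left q2 hc0]

lemma arith_main (n : ℕ) (hn : 0 < n) (m : ℕ) :
    ∑ a ∈ range n, ∑ b ∈ range n, (m : ℤ) ^ (Nat.gcd (Nat.gcd a b) n)
      = ∑ c ∈ n.divisors, ∑ d ∈ c.divisors,
          (μ (c / d) : ℤ) * (m : ℤ) ^ (n / c) * (d : ℤ) ^ 2 := by
  classical
  have key : ∀ c ∈ n.divisors,
      (∑ d ∈ c.divisors, (μ (c / d) : ℤ) * (m : ℤ) ^ (n / c) * (d : ℤ) ^ 2)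
        = (m : ℤ) ^ (n / c) * ∑ e ∈ c.divisors, (μ e : ℤ) * ((c / e : ℕ) : ℤ) ^ 2 := by
    intro c hcmem
    rw [Nat.mem_divisors] at hcmem
    rw [← Nat.sum_div_divisors c (fun e => (μ e : ℤ) * ((c / e : ℕ) : ℤ) ^ 2),
      Finset.mul_sum]
    apply Finset.sum_congr rfl
    intro d hd
    rw [Nat.mem_divisors] at hd
    rw [Nat.div_div_self hd.1 hd.2]
    ring
  rw [Finset.sum_congr rfl key,
    ← Nat.sum_div_divisors n
      (fun c => (m : ℤ) ^ (n / c) * ∑ e ∈ c.divisors, (μ e : ℤ) * ((c / e : ℕ) : ℤ) ^ 2)]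
  have hmaps : ∀ p ∈ range n ×ˢ range n,
      Nat.gcd (Nat.gcd p.1 p.2) n ∈ n.divisors :=
    fun p _ => Nat.mem_divisors.2 ⟨Nat.gcd_dvd_right _ _, hn.ne'⟩
  rw [← Finset.sum_product' (f := fun a b => (m : ℤ) ^ (Nat.gcd (Nat.gcd a b) n)),
    ← Finset.sum_fiberwise_of_maps_to hmaps (fun p => (m : ℤ) ^ (Nat.gcd (Nat.gcd p.1 p.2) n))]
  apply Finset.sum_congr rfl
  intro c hc
  have hcd := (Nat.mem_divisors.1 hc).1
  have hfib : ∀ p ∈ (range n ×ˢ range n).filter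
      (fun p => Nat.gcd (Nat.gcd p.1 p.2) n = c),
      (m : ℤ) ^ (Nat.gcd (Nat.gcd p.1 p.2) n) = (m : ℤ) ^ c := by
    intro p hp
    rw [(Finset.mem_filter.1 hp).2]
  rw [Finset.sum_congr rfl hfib, Finset.sum_const, nsmul_eq_mul, E_eq hn hcd,
    Nat.div_div_self hcd hn.ne']
  ring

end ARITH

open ArithmeticFunction
open scoped ArithmeticFunction.Moebius
section MAIN

open Multiplicative

lemma conjclasses_card_one {A : Type*} [Group A] (h : Nat.card A = 1) :
    Nat.card (ConjClasses A) = 1 := by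
  obtain ⟨hs, hne⟩ := Nat.card_eq_one_iff_unique.1 h
  rw [Nat.card_eq_one_iff_unique]
  constructor
  · exact ⟨fun a b => by
      obtain ⟨x, rfl⟩ := ConjClasses.mk_surjective a
      obtain ⟨y, rfl⟩ := ConjClasses.mk_surjective b
      rw [Subsingleton.elim x y]⟩
  · exact ⟨ConjClasses.mk 1⟩

def commEquivOfMulEquiv {A B : Type*} [Group A] [Group B] (e : A ≃* B) :
    {p : A × A // Commute p.1 p.2} ≃ {p : B × B // Commute p.1 p.2} :=
  Equiv.subtypeEquiv (e.toEquiv.prodCongr e.toEquiv) (fun p => by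
    constructor
    · intro h
      exact h.map e.toMonoidHom
    · intro h
      have := h.map e.symm.toMonoidHom
      simpa using this)

def sdprodEquiv {A C : Type*} [Group A] [Group C] (ψ : C →* MulAut A) :
    SemidirectProduct A C ψ ≃ A × C where
  toFun x := (x.left, x.right)
  invFun p := ⟨p.1, p.2⟩
  left_inv x := by cases x; rfl
  right_inv p := rfl

lemma zmod_double_sum (n : ℕ) [NeZero n] (f : ℕ → ℕ → ℤ) :
    ∑ s : ZMod n, ∑ t : ZMod n, f s.val t.val
      = ∑ a ∈ Finset.range n, ∑ b ∈ Finset.range n, f a b := by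
  rw [← Fin.sum_univ_eq_sum_range (fun a => ∑ b ∈ Finset.range n, f a b)]
  apply Fintype.sum_equiv (feq (n := n))
  intro s
  show ∑ t : ZMod n, f s.val t.val = ∑ b ∈ Finset.range n, f (feq s).1 b
  rw [← Fin.sum_univ_eq_sum_range (fun b => f (feq s).1 b)]
  apply Fintype.sum_equiv (feq (n := n))
  intro t
  rfl

/-- Let `M_k` be the number of irreducible complex representations
(equivalently, conjugacy classes) of the iterated wreath product
`W(r|_k) = Z_{r_1} ≀ ... ≀ Z_{r_k}` (defined recursively: `W(r|_0)` trivial and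
`W(r|_k) = W(r|_{k-1}) ≀ Z_{r_k}`).  Then `M_1 = r_1` and
`r_k · M_k = Σ_{d ∣ c ∣ r_k} μ(c/d) · M_{k-1}^{r_k/c} · d²`, where `μ` is the
Möbius function. -/
theorem card_irreps_iterated_wreath_recursion (r : ℕ → ℕ) (hr : ∀ i, 0 < r i)
    (W : ℕ → Type) [∀ k, Group (W k)] [∀ k, Finite (W k)]
    (hW0 : Nat.card (W 0) = 1)
    (φ : ∀ k, Multiplicative (ZMod (r (k + 1))) →* MulAut (Fin (r (k + 1)) → W k))
    (hφ : ∀ k (c : Multiplicative (ZMod (r (k + 1)))) (f : Fin (r (k + 1)) → W k)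
      (i : Fin (r (k + 1))),
      φ k c f i = f ⟨(i.val + (Multiplicative.toAdd c).val) % r (k + 1),
        Nat.mod_lt _ (hr (k + 1))⟩)
    (hW : ∀ k, Nonempty
      (W (k + 1) ≃* SemidirectProduct (Fin (r (k + 1)) → W k)
        (Multiplicative (ZMod (r (k + 1)))) (φ k)))
    (M : ℕ → ℤ) (hM : ∀ k, M k = Nat.card (ConjClasses (W k))) :
    M 1 = r 1 ∧
    ∀ k, 1 ≤ k →
      (r (k + 1) : ℤ) * M (k + 1) =
        ∑ c ∈ (r (k + 1)).divisors, ∑ d ∈ c.divisors,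
          μ (c / d) * M k ^ (r (k + 1) / c) * (d : ℤ) ^ 2 := by
  classical
  have main_core : ∀ k : ℕ,
      (Nat.card (ConjClasses (W (k + 1))) : ℤ) * (r (k + 1) : ℤ)
        = ∑ a ∈ Finset.range (r (k + 1)), ∑ b ∈ Finset.range (r (k + 1)),
            (Nat.card (ConjClasses (W k)) : ℤ) ^
              (Nat.gcd (Nat.gcd a b) (r (k + 1))) := by
    intro k
    have hn : 0 < r (k + 1) := hr (k + 1)
    haveI : NeZero (r (k + 1)) := ⟨hn.ne'⟩
    rw [← zmod_double_sum (r (k + 1))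
      (fun a b => (Nat.card (ConjClasses (W k)) : ℤ) ^ (Nat.gcd (Nat.gcd a b) (r (k + 1))))]
    obtain ⟨e⟩ := hW k
    have hcpG : Nat.card {p : W k × W k // Commute p.1 p.2}
        = Nat.card (ConjClasses (W k)) * Nat.card (W k) :=
      card_comm_eq_card_conjClasses_mul_card (W k)
    have hcardW : Nat.card (W (k + 1)) = Nat.card (W k) ^ (r (k + 1)) * (r (k + 1)) := by
      rw [Nat.card_congr (e.toEquiv.trans (sdprodEquiv (φ k))), Nat.card_prod,
        Nat.card_fun]
      have h1 : Nat.card (Fin (r (k + 1))) = r (k + 1) :=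
        Nat.card_eq_fintype_card.trans (Fintype.card_fin _)
      have h2 : Nat.card (Multiplicative (ZMod (r (k + 1)))) = r (k + 1) := by
        rw [Nat.card_congr Multiplicative.toAdd, Nat.card_zmod]
      rw [h1, h2]
    have hcomm : Nat.card {p : W (k + 1) × W (k + 1) // Commute p.1 p.2}
        = ∑ s : ZMod (r (k + 1)), ∑ t : ZMod (r (k + 1)),
            Nat.card (Sols (r (k + 1)) (W k) s t) := by
      rw [Nat.card_congr (commEquivOfMulEquiv e),
        card_commPairs_semidirect (φ k) hn (hφ k)]
    have hterm : ∀ s t : ZMod (r (k + 1)),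
        Nat.card (Sols (r (k + 1)) (W k) s t)
          = Nat.card (W k) ^ (r (k + 1)) * Nat.card (ConjClasses (W k)) ^
              (Nat.gcd (Nat.gcd s.val t.val) (r (k + 1))) := by
      intro s t
      rw [card_sols_formula, hcpG]
      have hD : Nat.gcd (Nat.gcd s.val t.val) (r (k + 1)) ≤ r (k + 1) :=
        Nat.le_of_dvd hn (Nat.gcd_dvd_right _ _)
      calc Nat.card (W k) ^ (r (k + 1) - Nat.gcd (Nat.gcd s.val t.val) (r (k + 1))) *
            (Nat.card (ConjClasses (W k)) * Nat.card (W k)) ^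
              (Nat.gcd (Nat.gcd s.val t.val) (r (k + 1)))
          = (Nat.card (W k) ^ (r (k + 1) - Nat.gcd (Nat.gcd s.val t.val) (r (k + 1))) *
              Nat.card (W k) ^ (Nat.gcd (Nat.gcd s.val t.val) (r (k + 1)))) *
              Nat.card (ConjClasses (W k)) ^ (Nat.gcd (Nat.gcd s.val t.val) (r (k + 1))) := by
            rw [mul_pow]; ring
        _ = _ := by rw [← pow_add, Nat.sub_add_cancel hD]
    have hburn := card_comm_eq_card_conjClasses_mul_card (W (k + 1))
    have hNat : Nat.card (ConjClasses (W (k + 1))) *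
        (Nat.card (W k) ^ (r (k + 1)) * (r (k + 1)))
        = ∑ s : ZMod (r (k + 1)), ∑ t : ZMod (r (k + 1)),
            Nat.card (W k) ^ (r (k + 1)) * Nat.card (ConjClasses (W k)) ^
              (Nat.gcd (Nat.gcd s.val t.val) (r (k + 1))) := by
      rw [← hcardW, ← hburn, hcomm]
      exact Finset.sum_congr rfl fun s _ => Finset.sum_congr rfl fun t _ => hterm s t
    have hInt := congrArg (Nat.cast : ℕ → ℤ) hNat
    push_cast at hInt
    have hgG0 : ((Nat.card (W k) : ℤ)) ^ (r (k + 1)) ≠ 0 := by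
      apply pow_ne_zero
      exact_mod_cast Nat.card_pos.ne'
    apply mul_left_cancel₀ hgG0
    calc ((Nat.card (W k) : ℤ)) ^ (r (k + 1)) *
          ((Nat.card (ConjClasses (W (k + 1))) : ℤ) * (r (k + 1) : ℤ))
        = (Nat.card (ConjClasses (W (k + 1))) : ℤ) *
            ((Nat.card (W k) : ℤ) ^ (r (k + 1)) * (r (k + 1) : ℤ)) := by ring
      _ = ∑ s : ZMod (r (k + 1)), ∑ t : ZMod (r (k + 1)),
            (Nat.card (W k) : ℤ) ^ (r (k + 1)) * (Nat.card (ConjClasses (W k)) : ℤ) ^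
              (Nat.gcd (Nat.gcd s.val t.val) (r (k + 1))) := hInt
      _ = _ := by
          rw [Finset.mul_sum]
          exact Finset.sum_congr rfl fun s _ => by rw [Finset.mul_sum]
  constructor
  · have h0 := main_core 0
    have hcc0 : Nat.card (ConjClasses (W 0)) = 1 := conjclasses_card_one hW0
    haveI : NeZero (r 1) := ⟨(hr 1).ne'⟩
    rw [hcc0] at h0
    simp only [Nat.cast_one, one_pow, Finset.sum_const, Finset.card_range,
      nsmul_eq_mul, mul_one] at h0
    have hr1 : ((r 1 : ℤ)) ≠ 0 := by exact_mod_cast (hr 1).ne'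
    have : (Nat.card (ConjClasses (W 1)) : ℤ) = r 1 := by
      apply mul_right_cancel₀ hr1
      rw [h0]
    rw [hM 1, this]
  · intro k _
    have h := main_core k
    have hn : 0 < r (k + 1) := hr (k + 1)
    haveI : NeZero (r (k + 1)) := ⟨hn.ne'⟩
    rw [hM (k + 1), hM k]
    calc (r (k + 1) : ℤ) * (Nat.card (ConjClasses (W (k + 1))) : ℤ)
        = (Nat.card (ConjClasses (W (k + 1))) : ℤ) * (r (k + 1) : ℤ) := mul_comm _ _
      _ = ∑ a ∈ Finset.range (r (k + 1)), ∑ b ∈ Finset.range (r (k + 1)),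
            ((Nat.card (ConjClasses (W k)) : ℤ)) ^ (Nat.gcd (Nat.gcd a b) (r (k + 1))) := h
      _ = _ := arith_main (r (k + 1)) hn (Nat.card (ConjClasses (W k)))

end MAIN
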